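/- Suppose the graph has at least one edge (so D > 0) and p < 1, and let α_p = (1−p)·Σ_{v_i∈V} d_i² / Σ_{v_i∈V} d_i·[(1−p)·d_i + p]. Then E_pri[n*] · E_pri[Σ_{v_i∈V*} d_i* d_i] / E_pri[Σ_{v_i∈V*} (d_i*)²] = α_p · n. -/

import Mathlib

open Finset

/-- Probability of a particular assignment `ω` of privacy labels, where `ω i = true`
means node `v_i` is private: each node is independently private with probability `p`. -/
noncomputable def priWeight {n : ℕ} (p : ℝ) (ω : Fin n → Bool) : ℝ :=
  ∏ i, if ω i then p else 1 - p

/-- The (random) set `V*` of public nodes under the labeling `ω`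
(modeling the condition that all public nodes belong to the largest public-cluster). -/
def pubNodes {n : ℕ} (ω : Fin n → Bool) : Finset (Fin n) :=
  Finset.univ.filter fun i => ω i = false

/-- The public-degree `d_i*` of node `v_i`: its number of public neighbors. -/
def pubDeg {n : ℕ} (G : SimpleGraph (Fin n)) [DecidableRel G.Adj]
    (ω : Fin n → Bool) (i : Fin n) : ℕ :=
  ((G.neighborFinset i).filter fun j => ω j = false).card

/-- The coefficient `α_p = (1−p)·Σ_i d_i² / Σ_i d_i·[(1−p)·d_i + p]`. -/
noncomputable def alphaP {n : ℕ} (G : SimpleGraph (Fin n)) [DecidableRel G.Adj] (p : ℝ) : ℝ :=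
  ((1 - p) * ∑ i, (G.degree i : ℝ) ^ 2) /
    ∑ i, (G.degree i : ℝ) * ((1 - p) * (G.degree i : ℝ) + p)

/-- Indicator that node `i` is public. -/
noncomputable def pubInd {n : ℕ} (ω : Fin n → Bool) (i : Fin n) : ℝ :=
  if ω i = false then 1 else 0

lemma sum_priWeight_prod {n : ℕ} (f : Fin n → Bool → ℝ) :
    ∑ ω : Fin n → Bool, ∏ i, f i (ω i) = ∏ i, (f i true + f i false) := by
  rw [← Fintype.piFinset_univ, ← Finset.prod_univ_sum]
  simp [Fintype.sum_bool]

lemma key {n : ℕ} (p : ℝ) (S : Finset (Fin n)) :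
    ∑ ω : Fin n → Bool, priWeight p ω * ∏ k ∈ S, pubInd ω k = (1 - p) ^ S.card := by
  have h1 : ∀ ω : Fin n → Bool,
      priWeight p ω * ∏ k ∈ S, pubInd ω k
        = ∏ i, ((if ω i then p else 1 - p) *
            (if i ∈ S then (if ω i = false then 1 else 0) else 1)) := by
    intro ω
    rw [Finset.prod_mul_distrib, priWeight]
    congr 1
    rw [show (∏ k ∈ S, pubInd ω k) = ∏ k ∈ S, (if ω k = false then (1:ℝ) else 0) from rfl,
      Finset.prod_ite_mem, Finset.univ_inter]
  simp_rw [h1]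
  rw [sum_priWeight_prod (f := fun i b =>
    (if b then p else 1 - p) * (if i ∈ S then (if b = false then (1:ℝ) else 0) else 1))]
  have h2 : ∀ i : Fin n,
      ((if (true:Bool) then p else 1 - p) *
        (if i ∈ S then (if (true:Bool) = false then (1:ℝ) else 0) else 1)
      + (if (false:Bool) then p else 1 - p) *
        (if i ∈ S then (if (false:Bool) = false then (1:ℝ) else 0) else 1))
      = if i ∈ S then (1 - p) else 1 := by
    intro i; by_cases h : i ∈ S <;> simp [h]
  rw [Finset.prod_congr rfl fun i _ => h2 i, Finset.prod_ite_mem, Finset.univ_inter,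
    Finset.prod_const]

lemma key1 {n : ℕ} (p : ℝ) (i : Fin n) :
    ∑ ω : Fin n → Bool, priWeight p ω * pubInd ω i = (1 - p) := by
  have := key p {i}
  simpa using this

lemma key2 {n : ℕ} (p : ℝ) (i j : Fin n) (hij : i ≠ j) :
    ∑ ω : Fin n → Bool, priWeight p ω * (pubInd ω i * pubInd ω j) = (1 - p) ^ 2 := by
  have := key p {i, j}
  rw [Finset.card_insert_of_notMem (by simpa using hij), Finset.card_singleton] at this
  rw [← this]
  congr 1; ext ω
  rw [Finset.prod_insert (by simpa using hij), Finset.prod_singleton]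

lemma key3 {n : ℕ} (p : ℝ) (i j k : Fin n) (hij : i ≠ j) (hik : i ≠ k) (hjk : j ≠ k) :
    ∑ ω : Fin n → Bool, priWeight p ω * (pubInd ω i * (pubInd ω j * pubInd ω k))
      = (1 - p) ^ 3 := by
  have := key p {i, j, k}
  rw [Finset.card_insert_of_notMem (by simp [hij, hik]),
    Finset.card_insert_of_notMem (by simpa using hjk), Finset.card_singleton] at this
  rw [← this]
  congr 1; ext ω
  rw [Finset.prod_insert (by simp [hij, hik]), Finset.prod_insert (by simpa using hjk),
    Finset.prod_singleton]

lemma pubDeg_cast {n : ℕ} (G : SimpleGraph (Fin n)) [DecidableRel G.Adj]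
    (ω : Fin n → Bool) (i : Fin n) :
    (pubDeg G ω i : ℝ) = ∑ j ∈ G.neighborFinset i, pubInd ω j := by
  rw [pubDeg, Finset.card_filter]
  push_cast
  simp [pubInd]

lemma sum_pub {n : ℕ} (ω : Fin n → Bool) (f : Fin n → ℝ) :
    ∑ i ∈ pubNodes ω, f i = ∑ i, pubInd ω i * f i := by
  rw [pubNodes, Finset.sum_filter]
  refine Finset.sum_congr rfl fun i _ => ?_
  by_cases h : ω i = false <;> simp [pubInd, h]

/-- `E[n*] = n(1-p)`. -/
lemma E1 {n : ℕ} (p : ℝ) :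
    ∑ ω : Fin n → Bool, priWeight p ω * ((pubNodes ω).card : ℝ) = n * (1 - p) := by
  have hc : ∀ ω : Fin n → Bool, ((pubNodes ω).card : ℝ) = ∑ i, pubInd ω i := by
    intro ω
    rw [pubNodes, Finset.card_filter]
    push_cast
    rfl
  simp_rw [hc, Finset.mul_sum]
  rw [Finset.sum_comm]
  simp_rw [key1]
  simp [mul_comm]
  ring

/-- `E[Σ_{i∈V*} d_i* d_i] = (1-p)² Σ_i d_i²`. -/
lemma E2 {n : ℕ} (G : SimpleGraph (Fin n)) [DecidableRel G.Adj] (p : ℝ) :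
    ∑ ω : Fin n → Bool, priWeight p ω *
        ∑ i ∈ pubNodes ω, (pubDeg G ω i : ℝ) * (G.degree i : ℝ)
      = (1 - p) ^ 2 * ∑ i, (G.degree i : ℝ) ^ 2 := by
  have hterm : ∀ ω : Fin n → Bool,
      priWeight p ω * ∑ i ∈ pubNodes ω, (pubDeg G ω i : ℝ) * (G.degree i : ℝ)
      = ∑ i, ∑ j ∈ G.neighborFinset i,
          (G.degree i : ℝ) * (priWeight p ω * (pubInd ω i * pubInd ω j)) := by
    intro ω
    rw [sum_pub, Finset.mul_sum]
    refine Finset.sum_congr rfl fun i _ => ?_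
    rw [pubDeg_cast]
    simp only [Finset.mul_sum, Finset.sum_mul]
    refine Finset.sum_congr rfl fun j _ => ?_
    ring
  simp_rw [hterm]
  rw [Finset.sum_comm]
  rw [Finset.mul_sum]
  refine Finset.sum_congr rfl fun i _ => ?_
  rw [Finset.sum_comm]
  have : ∀ j ∈ G.neighborFinset i,
      (∑ ω : Fin n → Bool, (G.degree i : ℝ) * (priWeight p ω * (pubInd ω i * pubInd ω j)))
      = (G.degree i : ℝ) * (1 - p) ^ 2 := by
    intro j hj
    rw [← Finset.mul_sum, key2 p i j (G.ne_of_adj (by simpa using hj))]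
  rw [Finset.sum_congr rfl this, Finset.sum_const, G.card_neighborFinset_eq_degree,
    nsmul_eq_mul]
  ring

/-- `E[Σ_{i∈V*} (d_i*)²] = (1-p)² Σ_i d_i((1-p)d_i + p)`. -/
lemma E3 {n : ℕ} (G : SimpleGraph (Fin n)) [DecidableRel G.Adj] (p : ℝ) :
    ∑ ω : Fin n → Bool, priWeight p ω *
        ∑ i ∈ pubNodes ω, (pubDeg G ω i : ℝ) ^ 2
      = (1 - p) ^ 2 * ∑ i, (G.degree i : ℝ) * ((1 - p) * (G.degree i : ℝ) + p) := by
  have hterm : ∀ ω : Fin n → Bool,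
      priWeight p ω * ∑ i ∈ pubNodes ω, (pubDeg G ω i : ℝ) ^ 2
      = ∑ i, ∑ j ∈ G.neighborFinset i, ∑ k ∈ G.neighborFinset i,
          priWeight p ω * (pubInd ω i * (pubInd ω j * pubInd ω k)) := by
    intro ω
    rw [sum_pub, Finset.mul_sum]
    refine Finset.sum_congr rfl fun i _ => ?_
    rw [pubDeg_cast, sq, Finset.sum_mul_sum]
    simp only [Finset.mul_sum, Finset.sum_mul, mul_assoc]
  simp_rw [hterm]
  rw [Finset.sum_comm]
  rw [Finset.mul_sum]
  refine Finset.sum_congr rfl fun i _ => ?_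
  rw [Finset.sum_comm]
  have hjk : ∀ j ∈ G.neighborFinset i,
      (∑ ω : Fin n → Bool, ∑ k ∈ G.neighborFinset i,
        priWeight p ω * (pubInd ω i * (pubInd ω j * pubInd ω k)))
      = ∑ k ∈ G.neighborFinset i, if j = k then (1-p)^2 else (1-p)^3 := by
    intro j hj
    rw [Finset.sum_comm]
    refine Finset.sum_congr rfl fun k hk => ?_
    have hij : i ≠ j := G.ne_of_adj (by simpa using hj)
    have hik : i ≠ k := G.ne_of_adj (by simpa using hk)
    by_cases h : j = k
    · subst h
      simp only [if_true]
      have : ∀ ω : Fin n → Bool, pubInd ω j * pubInd ω j = pubInd ω j := by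
        intro ω; by_cases hh : ω j = false <;> simp [pubInd, hh]
      simp_rw [this]
      exact key2 p i j hij
    · rw [if_neg h]
      exact key3 p i j k hij hik h
  rw [Finset.sum_congr rfl hjk]
  have hin : ∀ j ∈ G.neighborFinset i,
      (∑ k ∈ G.neighborFinset i, if j = k then (1-p)^2 else (1-p)^3)
      = ((1-p)^2 - (1-p)^3) + (G.degree i : ℝ) * (1-p)^3 := by
    intro j hj
    have : ∀ k ∈ G.neighborFinset i,
        (if j = k then (1-p)^2 else (1-p)^3)
        = (if j = k then (1-p)^2 - (1-p)^3 else 0) + (1-p)^3 := by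
      intro k _; by_cases h : j = k <;> simp [h]
    rw [Finset.sum_congr rfl this, Finset.sum_add_distrib, Finset.sum_ite_eq,
      if_pos hj, Finset.sum_const, G.card_neighborFinset_eq_degree, nsmul_eq_mul]
  rw [Finset.sum_congr rfl hin, Finset.sum_const, G.card_neighborFinset_eq_degree,
    nsmul_eq_mul]
  ring

/-- Theorem 4.6. Suppose the graph has at least one edge (so `D > 0`)
and `p < 1`.  Then, with `α_p = (1−p)·Σ_i d_i² / Σ_i d_i·[(1−p)·d_i + p]`,
`E_pri[n*] · E_pri[Σ_{v_i∈V*} d_i* d_i] / E_pri[Σ_{v_i∈V*} (d_i*)²] = α_p · n`. -/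
theorem stmt_14 (n : ℕ) (hn : 1 ≤ n) (G : SimpleGraph (Fin n)) [DecidableRel G.Adj]
    (p : ℝ) (hp0 : 0 ≤ p) (hp1 : p < 1)
    (hD : 0 < ∑ i, G.degree i) :
    (∑ ω : Fin n → Bool, priWeight p ω * ((pubNodes ω).card : ℝ)) *
        (∑ ω : Fin n → Bool, priWeight p ω *
          ∑ i ∈ pubNodes ω, (pubDeg G ω i : ℝ) * (G.degree i : ℝ)) /
        (∑ ω : Fin n → Bool, priWeight p ω *
          ∑ i ∈ pubNodes ω, (pubDeg G ω i : ℝ) ^ 2)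
      = alphaP G p * (n : ℝ) := by
  rw [E1, E2, E3, alphaP]
  set A := ∑ i, (G.degree i : ℝ) ^ 2
  set B := ∑ i, (G.degree i : ℝ) * ((1 - p) * (G.degree i : ℝ) + p)
  have h2 : ((1 - p) : ℝ) ^ 2 ≠ 0 := pow_ne_zero 2 (by linarith)
  rw [show ((n : ℝ) * (1 - p)) * ((1 - p) ^ 2 * A) = (1 - p) ^ 2 * ((1 - p) * A * (n : ℝ)) by
    ring]
  rw [mul_div_mul_left _ _ h2, div_mul_eq_mul_div]
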